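/- arXiv:1006.4560 — 2 statements merged into one kernel-verified Lean document; each statement's English description precedes it below -/
import Mathlib

section
/- Let R = k[x_1,...,x_d] be a polynomial ring over a field, m = (x_1,...,x_d), and I = (x_1^d,...,x_d^d). The normalization index s(I), the smallest integer s such that \overline{I^{n+1}} = I * \overline{I^n} for all n >= s, equals d - 1. -/
open IsLocalRing

/-- `x` is integral over the ideal `I`: it satisfies an equation of integral dependence
`x^n + a₁ x^{n-1} + ⋯ + aₙ = 0` with `aᵢ ∈ Iⁱ`. -/
def MemIntClosure {R : Type*} [CommRing R] (I : Ideal R) (x : R) : Prop :=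
  ∃ n : ℕ, 0 < n ∧ ∃ a : ℕ → R, (∀ i ∈ Finset.Icc 1 n, a i ∈ I ^ i) ∧
    x ^ n + ∑ i ∈ Finset.Icc 1 n, a i * x ^ (n - i) = 0

/-- The integral closure of an ideal `I` (as an ideal). -/
noncomputable def intCl {R : Type*} [CommRing R] (I : Ideal R) : Ideal R :=
  Ideal.span {x | MemIntClosure I x}

/-- The normalization index `s(I)`. -/
noncomputable def normIndex {R : Type*} [CommRing R] (I : Ideal R) : ℕ :=
  sInf {s | ∀ n, s ≤ n → intCl (I ^ (n + 1)) = I * intCl (I ^ n)}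

/-- The generation index `s₀(I)`. -/
noncomputable def genIndex {R : Type*} [CommRing R] (I : Ideal R) : ℕ :=
  sInf {s | 0 < s ∧ ∀ n, s < n →
    intCl (I ^ n) = ∑ i ∈ Finset.Icc 1 s, intCl (I ^ i) * intCl (I ^ (n - i))}

/-- Length of a module, as the Krull dimension of its lattice of submodules. -/
noncomputable def modLength (R M : Type*) [CommRing R] [AddCommGroup M] [Module R M] : ℕ∞ :=
  (Order.krullDim (Submodule R M)).unbotD 0

/-- Depth of a module with respect to an ideal: the supremum of lengths of
regular sequences on `M` contained in `I`. -/
noncomputable def idealDepth {R : Type*} (M : Type*) [CommRing R] [AddCommGroup M]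
    [Module R M] (I : Ideal R) : ℕ∞ :=
  sSup {n : ℕ∞ | ∃ rs : List R, (rs.length : ℕ∞) = n ∧ (∀ x ∈ rs, x ∈ I) ∧
    RingTheory.Sequence.IsRegular M rs}

/-- A ring is Cohen–Macaulay with respect to an ideal (e.g. the maximal ideal of a local
ring, or the maximal homogeneous ideal of a graded ring over a local ring) if its depth
equals its Krull dimension. -/
def IsCMRing (R : Type*) [CommRing R] (I : Ideal R) : Prop :=
  (idealDepth R I : WithBot ℕ∞) = ringKrullDim R

/-- A local ring is Cohen–Macaulay if its depth equals its dimension. -/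
def IsCMLocalRing (R : Type*) [CommRing R] [IsLocalRing R] : Prop :=
  IsCMRing R (maximalIdeal R)

/-- A local ring is analytically unramified if its completion is reduced. -/
def IsAnalyticallyUnramified (R : Type*) [CommRing R] [IsLocalRing R] : Prop :=
  IsReduced (AdicCompletion (maximalIdeal R) R)

/-- The Rees algebra `⨁ₙ Iₙ tⁿ ⊆ R[t]` of a multiplicative filtration. -/
def filtRees {R : Type*} [CommRing R] (F : ℕ → Ideal R) (h0 : F 0 = ⊤)
    (hmul : ∀ m n, F m * F n ≤ F (m + n)) : Subalgebra R (Polynomial R) where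
  carrier := {p | ∀ n, p.coeff n ∈ F n}
  add_mem' := fun {p q} hp hq n => by
    rw [Polynomial.coeff_add]; exact Ideal.add_mem _ (hp n) (hq n)
  mul_mem' := fun {p q} hp hq n => by
    rw [Polynomial.coeff_mul]
    refine Ideal.sum_mem _ fun c hc => ?_
    have h := Finset.HasAntidiagonal.mem_antidiagonal.mp hc
    exact h ▸ hmul c.1 c.2 (Ideal.mul_mem_mul (hp c.1) (hq c.2))
  algebraMap_mem' := fun r n => by
    simp only [Polynomial.algebraMap_apply, Polynomial.coeff_C]
    split
    · next h => subst h; rw [h0]; exact trivial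
    · exact Ideal.zero_mem _

/-- The maximal homogeneous ideal of a graded subalgebra of `R[t]` over a local ring `R`. -/
def maxHom {R : Type*} [CommRing R] [IsLocalRing R] (S : Subalgebra R (Polynomial R)) :
    Ideal S where
  carrier := {p | (p : Polynomial R).coeff 0 ∈ maximalIdeal R}
  add_mem' := fun {p q} hp hq => by
    show ((p + q : S) : Polynomial R).coeff 0 ∈ maximalIdeal R
    rw [Subalgebra.coe_add, Polynomial.coeff_add]
    exact Ideal.add_mem _ hp hq
  zero_mem' := by
    show ((0 : S) : Polynomial R).coeff 0 ∈ maximalIdeal R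
    simp
  smul_mem' := fun c p hp => by
    show ((c * p : S) : Polynomial R).coeff 0 ∈ maximalIdeal R
    rw [Subalgebra.coe_mul, Polynomial.mul_coeff_zero]
    exact Ideal.mul_mem_left _ _ hp

/-- The ideal `⨁ₙ I_{n+1} tⁿ` of the Rees algebra of a filtration; the quotient by it is
the associated graded ring `gr_F(R) = ⨁ₙ Iₙ/I_{n+1}`. -/
def filtGrIdeal {R : Type*} [CommRing R] (F : ℕ → Ideal R) (h0 : F 0 = ⊤)
    (hmul : ∀ m n, F m * F n ≤ F (m + n)) : Ideal (filtRees F h0 hmul) where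
  carrier := {p | ∀ n, (p : Polynomial R).coeff n ∈ F (n + 1)}
  add_mem' := fun {p q} hp hq n => by
    rw [Subalgebra.coe_add, Polynomial.coeff_add]
    exact Ideal.add_mem _ (hp n) (hq n)
  zero_mem' := fun n => by simp
  smul_mem' := fun c p hp => fun n => by
    show ((c * p : filtRees F h0 hmul) : Polynomial R).coeff n ∈ F (n + 1)
    rw [Subalgebra.coe_mul, Polynomial.coeff_mul]
    refine Ideal.sum_mem _ fun x hx => ?_
    have h : x.1 + x.2 = n := Finset.HasAntidiagonal.mem_antidiagonal.mp hx
    have : (c : Polynomial R).coeff x.1 * (p : Polynomial R).coeff x.2 ∈ F (x.1 + (x.2 + 1)) :=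
      hmul x.1 (x.2 + 1) (Ideal.mul_mem_mul (c.2 x.1) (hp x.2))
    rwa [show x.1 + (x.2 + 1) = n + 1 by omega] at this

/-- The associated graded ring of a filtration. -/
abbrev filtGr {R : Type*} [CommRing R] (F : ℕ → Ideal R) (h0 : F 0 = ⊤)
    (hmul : ∀ m n, F m * F n ≤ F (m + n)) : Type _ :=
  filtRees F h0 hmul ⧸ filtGrIdeal F h0 hmul


section Aux
open MvPolynomial Pointwise

variable {k : Type*} [Field k] {d : ℕ}

/-- Total degree of an exponent vector. -/
private def Dg {d : ℕ} (u : Fin d →₀ ℕ) : ℕ := ∑ i, u i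

private lemma Dg_add (a b : Fin d →₀ ℕ) : Dg (a + b) = Dg a + Dg b := by
  simp [Dg, Finset.sum_add_distrib]

private lemma Dg_single (i : Fin d) (c : ℕ) : Dg (Finsupp.single i c) = c := by
  simp [Dg, Finsupp.single_apply]

private lemma Dg_mono {a b : Fin d →₀ ℕ} (h : a ≤ b) : Dg a ≤ Dg b :=
  Finset.sum_le_sum fun i _ => Finsupp.le_def.mp h i

private lemma mon_prod (e : Fin d →₀ ℕ) (a : k) :
    monomial e a = C a * ∏ i, (X i : MvPolynomial (Fin d) k) ^ e i := by
  rw [monomial_eq, Finsupp.prod_pow]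

private lemma exists_le_Dg {s : ℕ} {u : Fin d →₀ ℕ} (h : s ≤ Dg u) :
    ∃ e, e ≤ u ∧ Dg e = s := by
  induction s with
  | zero => exact ⟨0, zero_le, by simp [Dg]⟩
  | succ s ih =>
    obtain ⟨e, hle, he⟩ := ih (by omega)
    have hex : ∃ i, e i < u i := by
      by_contra hc
      push_neg at hc
      have : Dg u ≤ Dg e := Finset.sum_le_sum fun i _ => hc i
      omega
    obtain ⟨i, hi⟩ := hex
    refine ⟨e + Finsupp.single i 1, ?_, by rw [Dg_add, Dg_single, he]⟩
    rw [Finsupp.le_def]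
    intro j
    have := Finsupp.le_def.mp hle j
    simp only [Finsupp.add_apply, Finsupp.single_apply]
    split_ifs with hij
    · subst hij; omega
    · omega

private lemma span_X_pow_eq (k : Type*) [Field k] (d : ℕ) (s : ℕ) :
    (Ideal.span (Set.range (X : Fin d → MvPolynomial (Fin d) k))) ^ s =
      Ideal.span ((fun e => monomial e (1 : k)) '' {e | Dg e = s}) := by
  induction s with
  | zero =>
    rw [pow_zero, Ideal.one_eq_top, eq_comm, Ideal.eq_top_iff_one]
    exact Ideal.subset_span ⟨0, by simp [Dg], by simp⟩
  | succ s ih =>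
    have hXmon : ∀ i : Fin d, (X i : MvPolynomial (Fin d) k) = monomial (Finsupp.single i 1) 1 := by
      intro i; rw [← pow_one (X i : MvPolynomial (Fin d) k), X_pow_eq_monomial]
    rw [pow_succ, ih, Ideal.span_mul_span']
    apply le_antisymm
    · rw [Ideal.span_le]
      rintro p hp
      rw [Set.mem_mul] at hp
      obtain ⟨q, hq, r, hr, rfl⟩ := hp
      obtain ⟨e, he, rfl⟩ := hq
      obtain ⟨i, rfl⟩ := hr
      have hmul : monomial e (1 : k) * X i = monomial (e + Finsupp.single i 1) 1 := by
        rw [hXmon i, monomial_mul, one_mul]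
      rw [hmul]
      exact Ideal.subset_span ⟨_, by rw [Set.mem_setOf_eq, Dg_add, Dg_single, he], rfl⟩
    · rw [Ideal.span_le]
      rintro p ⟨u, hu, rfl⟩
      rw [Set.mem_setOf_eq] at hu
      have h1 : ∃ i, 0 < u i := by
        by_contra hc
        push_neg at hc
        have : Dg u = 0 := Finset.sum_eq_zero fun i _ => Nat.le_zero.mp (hc i)
        omega
      obtain ⟨i, hi⟩ := h1
      have hue : u = (u - Finsupp.single i 1) + Finsupp.single i 1 := by
        ext j
        simp only [Finsupp.add_apply, Finsupp.tsub_apply, Finsupp.single_apply]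
        split_ifs with hij
        · subst hij; omega
        · omega
      have hDge : Dg (u - Finsupp.single i 1) = s := by
        have h2 : Dg u = Dg (u - Finsupp.single i 1) + 1 := by
          conv_lhs => rw [hue]
          rw [Dg_add, Dg_single]
        omega
      have hmul : monomial u (1 : k)
          = monomial (u - Finsupp.single i 1) 1 * X i := by
        rw [hXmon i, monomial_mul, one_mul, ← hue]
      show monomial u (1:k) ∈ _
      rw [hmul]
      exact Ideal.subset_span <|
        Set.mul_mem_mul ⟨_, hDge, rfl⟩ ⟨i, rfl⟩

private lemma mem_mpow_iff (f : MvPolynomial (Fin d) k) (s : ℕ) :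
    f ∈ (Ideal.span (Set.range (X : Fin d → MvPolynomial (Fin d) k))) ^ s ↔
      ∀ u ∈ f.support, s ≤ Dg u := by
  rw [span_X_pow_eq, mem_ideal_span_monomial_image]
  constructor
  · intro h u hu
    obtain ⟨e, he, hle⟩ := h u hu
    exact he ▸ Dg_mono hle
  · intro h u hu
    obtain ⟨e, hle, he⟩ := exists_le_Dg (h u hu)
    exact ⟨e, he, hle⟩


/-- The map `X i ↦ t · X i` into `R'[t]`, reading off homogeneous components. -/
private noncomputable def psiMap (k : Type*) [Field k] (d : ℕ) :
    MvPolynomial (Fin d) k →ₐ[k] Polynomial (MvPolynomial (Fin d) k) :=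
  aeval fun i => Polynomial.X * Polynomial.C (X i)

private lemma psiMap_monomial (e : Fin d →₀ ℕ) (a : k) :
    psiMap k d (monomial e a) = Polynomial.monomial (Dg e) (monomial e a) := by
  rw [psiMap, aeval_monomial, Finsupp.prod_pow]
  have h1 : ∀ i : Fin d, (Polynomial.X * Polynomial.C (X i)) ^ e i
      = Polynomial.X ^ e i * Polynomial.C ((X i : MvPolynomial (Fin d) k) ^ e i) := by
    intro i; rw [mul_pow, Polynomial.C_pow]
  simp only [h1]
  rw [Finset.prod_mul_distrib, Finset.prod_pow_eq_pow_sum, ← map_prod]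
  have h2 : algebraMap k (Polynomial (MvPolynomial (Fin d) k)) a
      = Polynomial.C (C a) := by
    rw [Polynomial.algebraMap_apply, algebraMap_eq]
  rw [h2, ← mul_assoc, mul_comm (Polynomial.C (C a)) (Polynomial.X ^ _), mul_assoc,
    ← Polynomial.C_mul, ← mon_prod, mul_comm (Polynomial.X ^ _) (Polynomial.C _),
    Polynomial.C_mul_X_pow_eq_monomial]
  rfl

private lemma X_pow_dvd_psiMap_of_mem {f : MvPolynomial (Fin d) k} {s : ℕ}
    (hf : f ∈ (Ideal.span (Set.range (X : Fin d → MvPolynomial (Fin d) k))) ^ s) :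
    Polynomial.X ^ s ∣ psiMap k d f := by
  rw [← Ideal.mem_span_singleton]
  have hle : (Ideal.span (Set.range (X : Fin d → MvPolynomial (Fin d) k))) ^ s ≤
      Ideal.comap (psiMap k d).toRingHom
        (Ideal.span {(Polynomial.X : Polynomial (MvPolynomial (Fin d) k)) ^ s}) := by
    rw [span_X_pow_eq, Ideal.span_le]
    rintro p ⟨e, he, rfl⟩
    rw [Set.mem_setOf_eq] at he
    simp only [SetLike.mem_coe, Ideal.mem_comap, AlgHom.toRingHom_eq_coe, RingHom.coe_coe]
    rw [psiMap_monomial, ← Polynomial.C_mul_X_pow_eq_monomial, he, Ideal.mem_span_singleton]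
    exact Dvd.intro _ (mul_comm _ _)
  exact hle hf

private lemma coeff_psiMap (f : MvPolynomial (Fin d) k) (u : Fin d →₀ ℕ) :
    MvPolynomial.coeff u (((psiMap k d f)).coeff (Dg u)) = MvPolynomial.coeff u f := by
  induction f using MvPolynomial.induction_on' with
  | monomial e a =>
    rw [psiMap_monomial, Polynomial.coeff_monomial]
    by_cases he : e = u
    · subst he; simp
    · rw [MvPolynomial.coeff_monomial, if_neg he]
      split_ifs with h
      · rw [MvPolynomial.coeff_monomial, if_neg he]
      · simp
  | add p q hp hq =>
    rw [map_add, Polynomial.coeff_add, MvPolynomial.coeff_add, coeff_add, hp, hq]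

private lemma mem_of_X_pow_dvd_psiMap {f : MvPolynomial (Fin d) k} {s : ℕ}
    (h : Polynomial.X ^ s ∣ psiMap k d f) :
    f ∈ (Ideal.span (Set.range (X : Fin d → MvPolynomial (Fin d) k))) ^ s := by
  rw [mem_mpow_iff]
  intro u hu
  by_contra hlt
  push_neg at hlt
  have h0 : (psiMap k d f).coeff (Dg u) = 0 :=
    Polynomial.X_pow_dvd_iff.mp h _ hlt
  have := coeff_psiMap f u
  rw [h0] at this
  simp only [MvPolynomial.coeff_zero] at this
  exact MvPolynomial.mem_support_iff.mp hu this.symm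

/-- Key polynomial fact: `(t^s)` is "integrally closed" in `A[t]` for `A` a domain. -/
private lemma pol_dvd {A : Type*} [CommRing A] [IsDomain A] (s N : ℕ)
    (g : Polynomial A) (b : ℕ → Polynomial A)
    (hb : ∀ i ∈ Finset.Icc 1 N, (Polynomial.X : Polynomial A) ^ (s * i) ∣ b i)
    (heq : g ^ N + ∑ i ∈ Finset.Icc 1 N, b i * g ^ (N - i) = 0) :
    Polynomial.X ^ s ∣ g := by
  rcases eq_or_ne g 0 with rfl | hg
  · exact dvd_zero _
  suffices h : ∀ v, v ≤ s → Polynomial.X ^ v ∣ g from h s le_rfl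
  intro v
  induction v with
  | zero => intro _; simp
  | succ v ih =>
    intro hvs
    have hv : Polynomial.X ^ v ∣ g := ih (by omega)
    have hsum : Polynomial.X ^ (v * N + 1) ∣ ∑ i ∈ Finset.Icc 1 N, b i * g ^ (N - i) := by
      refine Finset.dvd_sum fun i hi => ?_
      obtain ⟨hi1, hi2⟩ := Finset.mem_Icc.mp hi
      have d2 : Polynomial.X ^ (v * (N - i)) ∣ g ^ (N - i) := by
        rw [pow_mul]; exact pow_dvd_pow_of_dvd hv _
      have d3 : Polynomial.X ^ (s * i + v * (N - i)) ∣ b i * g ^ (N - i) := by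
        rw [pow_add]; exact mul_dvd_mul (hb i hi) d2
      refine dvd_trans (pow_dvd_pow _ ?_) d3
      have e1 : v * N = v * i + v * (N - i) := by
        rw [← Nat.mul_add]; congr 1; omega
      have e2 : v * i + i = (v + 1) * i := by ring
      have e3 : (v + 1) * i ≤ s * i := Nat.mul_le_mul_right _ (by omega)
      linarith
    have hXg : Polynomial.X ^ (v * N + 1) ∣ g ^ N := by
      have hneg : g ^ N = -∑ i ∈ Finset.Icc 1 N, b i * g ^ (N - i) :=
        eq_neg_of_add_eq_zero_left heq
      rw [hneg]
      exact dvd_neg.mpr hsum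
    obtain ⟨h', rfl⟩ := hv
    have hXn : (Polynomial.X : Polynomial A) ^ (v * N) ≠ 0 :=
      pow_ne_zero _ Polynomial.X_ne_zero
    rw [mul_pow, ← pow_mul, pow_succ] at hXg
    have hdvd : Polynomial.X ∣ h' ^ N := (mul_dvd_mul_iff_left hXn).mp hXg
    obtain ⟨h2, rfl⟩ := Polynomial.prime_X.dvd_of_dvd_pow hdvd
    exact ⟨h2, by ring⟩

private lemma prod_pow_mem {A : Type*} [CommRing A] (J : Ideal A) {ι : Type*}
    (t : Finset ι) (f : ι → A) (c : ι → ℕ) (hf : ∀ i ∈ t, f i ∈ J) :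
    ∏ i ∈ t, f i ^ c i ∈ J ^ (∑ i ∈ t, c i) := by
  classical
  induction t using Finset.induction_on with
  | empty => simp [Ideal.one_eq_top]
  | @insert a t' hx ih =>
    rw [Finset.prod_insert hx, Finset.sum_insert hx, pow_add]
    exact Ideal.mul_mem_mul (Ideal.pow_mem_pow (hf a (Finset.mem_insert_self a t')) _)
      (ih fun i hi => hf i (Finset.mem_insert_of_mem hi))


private lemma Ispan_le (k : Type*) [Field k] (d : ℕ) :
    Ideal.span (Set.range fun i : Fin d => (X i : MvPolynomial (Fin d) k) ^ d)
      ≤ (Ideal.span (Set.range (X : Fin d → MvPolynomial (Fin d) k))) ^ d := by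
  rw [Ideal.span_le]
  rintro p ⟨i, rfl⟩
  exact Ideal.pow_mem_pow (Ideal.subset_span (Set.mem_range_self i)) d

private lemma mpow_le_intCl (hd : 0 < d) (n : ℕ) :
    (Ideal.span (Set.range (X : Fin d → MvPolynomial (Fin d) k))) ^ (d * n)
      ≤ intCl ((Ideal.span (Set.range fun i : Fin d => (X i : MvPolynomial (Fin d) k) ^ d)) ^ n) := by
  rw [span_X_pow_eq, Ideal.span_le]
  rintro p ⟨e, he, rfl⟩
  rw [Set.mem_setOf_eq] at he
  apply Ideal.subset_span
  show MemIntClosure _ (monomial e (1:k))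
  refine ⟨d, hd, fun i => if i = d then -(monomial e (1:k)) ^ d else 0, ?_, ?_⟩
  · intro i hi
    show (if i = d then -(monomial e (1:k)) ^ d else 0) ∈ _
    by_cases h : i = d
    · rw [if_pos h, h]
      apply neg_mem
      have hmon : (monomial e (1:k)) ^ d = ∏ j, ((X j : MvPolynomial (Fin d) k) ^ d) ^ e j := by
        rw [mon_prod, C_1, one_mul, ← Finset.prod_pow]
        exact Finset.prod_congr rfl fun j _ => by rw [← pow_mul, mul_comm, pow_mul]
      have hp := prod_pow_mem
        (Ideal.span (Set.range fun i : Fin d => (X i : MvPolynomial (Fin d) k) ^ d))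
        Finset.univ (fun j => (X j : MvPolynomial (Fin d) k) ^ d) (fun j => e j)
        (fun j _ => Ideal.subset_span ⟨j, rfl⟩)
      rw [← pow_mul, mul_comm n d, ← he]
      rw [hmon]
      exact hp
    · rw [if_neg h]; exact zero_mem _
  · rw [Finset.sum_eq_single_of_mem d (Finset.mem_Icc.mpr ⟨hd, le_rfl⟩)
      (fun i _ hne => by
        show (if i = d then -(monomial e (1:k)) ^ d else 0) * _ = 0
        rw [if_neg hne, zero_mul])]
    simp

private lemma intCl_le_mpow (hd : 0 < d) (n : ℕ) :
    intCl ((Ideal.span (Set.range fun i : Fin d => (X i : MvPolynomial (Fin d) k) ^ d)) ^ n)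
      ≤ (Ideal.span (Set.range (X : Fin d → MvPolynomial (Fin d) k))) ^ (d * n) := by
  rw [intCl, Ideal.span_le]
  intro x hx
  obtain ⟨N, hN, a, ha, heq⟩ := hx
  have h1 : (Ideal.span (Set.range fun i : Fin d => (X i : MvPolynomial (Fin d) k) ^ d)) ^ n
      ≤ (Ideal.span (Set.range (X : Fin d → MvPolynomial (Fin d) k))) ^ (d * n) := by
    rw [pow_mul]
    exact Ideal.pow_right_mono (Ispan_le k d) n
  have hpow : ∀ i : ℕ,
      ((Ideal.span (Set.range fun i : Fin d => (X i : MvPolynomial (Fin d) k) ^ d)) ^ n) ^ i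
        ≤ (Ideal.span (Set.range (X : Fin d → MvPolynomial (Fin d) k))) ^ (d * n * i) := by
    intro i
    rw [pow_mul (Ideal.span (Set.range (X : Fin d → MvPolynomial (Fin d) k))) (d * n) i]
    exact Ideal.pow_right_mono h1 i
  have heq2 : (psiMap k d x) ^ N
      + ∑ i ∈ Finset.Icc 1 N, (psiMap k d (a i)) * (psiMap k d x) ^ (N - i) = 0 := by
    have hc := congrArg (psiMap k d) heq
    simpa [map_add, map_pow, map_sum, map_mul] using hc
  have hb : ∀ i ∈ Finset.Icc 1 N,
      (Polynomial.X : Polynomial (MvPolynomial (Fin d) k)) ^ (d * n * i) ∣ psiMap k d (a i) :=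
    fun i hi => X_pow_dvd_psiMap_of_mem (hpow i (ha i hi))
  exact mem_of_X_pow_dvd_psiMap (pol_dvd (d * n) N _ _ hb heq2)

private lemma intCl_eq (hd : 0 < d) (n : ℕ) :
    intCl ((Ideal.span (Set.range fun i : Fin d => (X i : MvPolynomial (Fin d) k) ^ d)) ^ n)
      = (Ideal.span (Set.range (X : Fin d → MvPolynomial (Fin d) k))) ^ (d * n) :=
  le_antisymm (intCl_le_mpow hd n) (mpow_le_intCl hd n)

private lemma mul_mpow (hd : 0 < d) {n : ℕ} (hn : d - 1 ≤ n) :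
    Ideal.span (Set.range fun i : Fin d => (X i : MvPolynomial (Fin d) k) ^ d) *
      (Ideal.span (Set.range (X : Fin d → MvPolynomial (Fin d) k))) ^ (d * n)
      = (Ideal.span (Set.range (X : Fin d → MvPolynomial (Fin d) k))) ^ (d * (n + 1)) := by
  apply le_antisymm
  · refine le_trans (Ideal.mul_mono_left (Ispan_le k d)) ?_
    rw [← pow_add]
    have : d + d * n = d * (n + 1) := by ring
    rw [this]
  · rw [span_X_pow_eq k d (d * (n + 1)), Ideal.span_le]
    rintro p ⟨u, hu, rfl⟩
    rw [Set.mem_setOf_eq] at hu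
    have hex : ∃ i, d ≤ u i := by
      by_contra hc
      push_neg at hc
      have h1 : Dg u ≤ ∑ _i : Fin d, (d - 1) :=
        Finset.sum_le_sum fun i _ => by have := hc i; omega
      rw [Finset.sum_const, Finset.card_univ, Fintype.card_fin, smul_eq_mul] at h1
      have h2 : d * (d - 1) < d * (n + 1) := (Nat.mul_lt_mul_left hd).mpr (by omega)
      omega
    obtain ⟨i, hi⟩ := hex
    have hue : u = Finsupp.single i d + (u - Finsupp.single i d) := by
      ext j
      simp only [Finsupp.add_apply, Finsupp.tsub_apply, Finsupp.single_apply]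
      split_ifs with hij
      · subst hij; omega
      · omega
    have h2 : Dg u = Dg (Finsupp.single i d + (u - Finsupp.single i d)) := by rw [← hue]
    rw [Dg_add, Dg_single] at h2
    have hDge : Dg (u - Finsupp.single i d) = d * n := by
      have h3 : d * (n + 1) = d * n + d := by ring
      omega
    have hmono : monomial u (1:k) = (X i) ^ d * monomial (u - Finsupp.single i d) 1 := by
      rw [X_pow_eq_monomial, monomial_mul, one_mul, ← hue]
    show monomial u (1:k) ∈ _
    rw [hmono]
    exact Ideal.mul_mem_mul (Ideal.subset_span ⟨i, rfl⟩)
      (by rw [span_X_pow_eq k d (d * n)]; exact Ideal.subset_span ⟨_, hDge, rfl⟩)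

private noncomputable def nuFun (d : ℕ) : Fin d →₀ ℕ := Finsupp.equivFunOnFinite.symm fun _ => d - 1

private lemma nuFun_apply (d : ℕ) (j : Fin d) : nuFun d j = d - 1 := rfl

private lemma Dg_nuFun (d : ℕ) : Dg (nuFun d) = d * (d - 1) := by
  simp [Dg, nuFun_apply, Finset.sum_const, Finset.card_univ, mul_comm]

private lemma witness_mem (k : Type*) [Field k] (d : ℕ) :
    monomial (nuFun d) (1:k)
      ∈ (Ideal.span (Set.range (X : Fin d → MvPolynomial (Fin d) k))) ^ (d * (d - 1)) := by
  rw [span_X_pow_eq]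
  exact Ideal.subset_span ⟨nuFun d, Dg_nuFun d, rfl⟩

private lemma image_mono_mul (A B : Set (Fin d →₀ ℕ)) :
    ((fun e => monomial e (1:k)) '' A) * ((fun e => monomial e (1:k)) '' B)
      = (fun e => monomial e (1:k)) '' (A + B) := by
  ext p
  constructor
  · intro hp
    rw [Set.mem_mul] at hp
    obtain ⟨q, ⟨a, ha, rfl⟩, r, ⟨b, hb, rfl⟩, rfl⟩ := hp
    exact ⟨a + b, Set.add_mem_add ha hb, by rw [monomial_mul, one_mul]⟩
  · rintro ⟨c, hc, rfl⟩
    rw [Set.mem_add] at hc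
    obtain ⟨a, ha, b, hb, rfl⟩ := hc
    have : monomial (a + b) (1:k) = monomial a 1 * monomial b 1 := by
      rw [monomial_mul, one_mul]
    show monomial (a + b) (1:k) ∈ _
    rw [this]
    exact Set.mul_mem_mul ⟨a, ha, rfl⟩ ⟨b, hb, rfl⟩

private lemma Ispan_eq (k : Type*) [Field k] (d : ℕ) :
    Ideal.span (Set.range fun i : Fin d => (X i : MvPolynomial (Fin d) k) ^ d)
      = Ideal.span ((fun e => monomial e (1:k)) ''
          Set.range (fun i : Fin d => Finsupp.single i d)) := by
  congr 1
  rw [← Set.range_comp]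
  exact congrArg _ (funext fun i => X_pow_eq_monomial)

private lemma witness_not_mem (hd2 : 2 ≤ d) :
    monomial (nuFun d) (1:k)
      ∉ Ideal.span (Set.range fun i : Fin d => (X i : MvPolynomial (Fin d) k) ^ d) *
          (Ideal.span (Set.range (X : Fin d → MvPolynomial (Fin d) k))) ^ (d * (d - 2)) := by
  classical
  intro hmem
  rw [Ispan_eq k d, span_X_pow_eq k d (d * (d - 2)), Ideal.span_mul_span',
    image_mono_mul, mem_ideal_span_monomial_image] at hmem
  obtain ⟨c, hc, hle⟩ := hmem (nuFun d) (by
    rw [support_monomial, if_neg one_ne_zero]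
    exact Finset.mem_singleton_self _)
  rw [Set.mem_add] at hc
  obtain ⟨p1, hp1, p2, hp2, rfl⟩ := hc
  obtain ⟨i, rfl⟩ := hp1
  have h1 := Finsupp.le_def.mp hle i
  rw [Finsupp.add_apply, Finsupp.single_apply, if_pos rfl, nuFun_apply] at h1
  omega

end Aux

/-- For `R = k[x₁,…,x_d]` and `I = (x₁^d,…,x_d^d)`, the normalization index `s(I)`,
the smallest `s` with `\overline{I^{n+1}} = I·\overline{I^n}` for all `n ≥ s`,
equals `d - 1`. -/
theorem statement1 (k : Type*) [Field k] (d : ℕ) (hd : 0 < d)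
    (I : Ideal (MvPolynomial (Fin d) k))
    (hI : I = Ideal.span (Set.range fun i : Fin d => MvPolynomial.X i ^ d)) :
    normIndex I = d - 1 := by
  subst hI
  have hmem : (d - 1) ∈ {s | ∀ n, s ≤ n →
      intCl (Ideal.span (Set.range fun i : Fin d => (MvPolynomial.X i : MvPolynomial (Fin d) k) ^ d) ^ (n + 1))
        = Ideal.span (Set.range fun i : Fin d => (MvPolynomial.X i : MvPolynomial (Fin d) k) ^ d) *
          intCl (Ideal.span (Set.range fun i : Fin d => (MvPolynomial.X i : MvPolynomial (Fin d) k) ^ d) ^ n)} := by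
    intro n hn
    rw [intCl_eq hd, intCl_eq hd, mul_mpow hd hn]
  have hlb : ∀ s ∈ {s | ∀ n, s ≤ n →
      intCl (Ideal.span (Set.range fun i : Fin d => (MvPolynomial.X i : MvPolynomial (Fin d) k) ^ d) ^ (n + 1))
        = Ideal.span (Set.range fun i : Fin d => (MvPolynomial.X i : MvPolynomial (Fin d) k) ^ d) *
          intCl (Ideal.span (Set.range fun i : Fin d => (MvPolynomial.X i : MvPolynomial (Fin d) k) ^ d) ^ n)},
      d - 1 ≤ s := by
    intro s hs
    by_contra hlt
    push_neg at hlt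
    have hd2 : 2 ≤ d := by omega
    have hcond := hs (d - 2) (by omega)
    rw [intCl_eq hd, intCl_eq hd, show d - 2 + 1 = d - 1 from by omega] at hcond
    have hw := witness_mem k d
    rw [hcond] at hw
    exact witness_not_mem hd2 hw
  exact le_antisymm (Nat.sInf_le hmem) (hlb _ (Nat.sInf_mem ⟨_, hmem⟩))
end

section
/- Let R = k[x_1,...,x_6] and I = (x_1x_2x_5, x_1x_3x_4, x_2x_3x_6, x_4x_5x_6). Then the monomial x_1x_2x_3x_4x_5x_6 lies in the integral closure of I^2 but not in I^2; in particular I is not normal. -/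
open IsLocalRing

section SqKAux

open MvPolynomial

def sqK (k : Type*) [CommRing k] : Ideal (MvPolynomial (Fin 6) k) where
  carrier := {p | ∀ e : Fin 6 →₀ ℕ, (∀ j, e j ≤ 1) → coeff e p = 0}
  add_mem' := fun {p q} hp hq e he => by rw [coeff_add, hp e he, hq e he, add_zero]
  zero_mem' := fun e he => by simp
  smul_mem' := fun c p hp e he => by
    rw [smul_eq_mul, coeff_mul]
    refine Finset.sum_eq_zero fun x hx => ?_
    have hsum : x.1 + x.2 = e := Finset.HasAntidiagonal.mem_antidiagonal.mp hx
    have h2 : ∀ j, x.2 j ≤ 1 := fun j => by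
      have h1 := he j
      have : x.1 j + x.2 j = e j := by rw [← hsum]; rfl
      omega
    rw [hp x.2 h2, mul_zero]

lemma monomial_mem_sqK {k : Type*} [CommRing k] (d : Fin 6 →₀ ℕ) (c : k) (h : ∃ j, 2 ≤ d j) :
    (monomial d c : MvPolynomial (Fin 6) k) ∈ sqK k := by
  intro e he
  rw [coeff_monomial]
  split
  · next heq =>
    obtain ⟨j, hj⟩ := h
    subst heq
    exact absurd (he j) (by omega)
  · rfl

lemma prodK {k : Type*} [CommRing k] (j : Fin 6) (a b c d e f : Fin 6)
    (h : 2 ≤ ((Finsupp.single a 1 + Finsupp.single b 1 + Finsupp.single c 1)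
      + (Finsupp.single d 1 + Finsupp.single e 1 + Finsupp.single f 1) : Fin 6 →₀ ℕ) j) :
    (X a * X b * X c : MvPolynomial (Fin 6) k) * (X d * X e * X f) ∈ sqK k := by
  have : (X a * X b * X c : MvPolynomial (Fin 6) k) * (X d * X e * X f)
      = monomial ((Finsupp.single a 1 + Finsupp.single b 1 + Finsupp.single c 1)
        + (Finsupp.single d 1 + Finsupp.single e 1 + Finsupp.single f 1)) 1 := by
    simp [X, monomial_mul]
  rw [this]
  exact monomial_mem_sqK _ _ ⟨j, h⟩

end SqKAux

open MvPolynomial in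
/-- For `R = k[x₁,…,x₆]` and `I = (x₁x₂x₅, x₁x₃x₄, x₂x₃x₆, x₄x₅x₆)`, the monomial
`x₁x₂x₃x₄x₅x₆` lies in the integral closure of `I²` but not in `I²`; in particular
`I` is not normal. -/
theorem statement18 (k : Type*) [Field k]
    (I : Ideal (MvPolynomial (Fin 6) k))
    (hI : I = Ideal.span {X 0 * X 1 * X 4, X 0 * X 2 * X 3, X 1 * X 2 * X 5,
      X 3 * X 4 * X 5})
    (M : MvPolynomial (Fin 6) k) (hM : M = X 0 * X 1 * X 2 * X 3 * X 4 * X 5) :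
    MemIntClosure (I ^ 2) M ∧ M ∉ I ^ 2 ∧ ¬ (∀ n : ℕ, intCl (I ^ n) = I ^ n) := by
  -- membership of generators
  have hg0 : (X 0 * X 1 * X 4 : MvPolynomial (Fin 6) k) ∈ I := by
    rw [hI]; exact Ideal.subset_span (by simp)
  have hg1 : (X 0 * X 2 * X 3 : MvPolynomial (Fin 6) k) ∈ I := by
    rw [hI]; exact Ideal.subset_span (by simp)
  have hg2 : (X 1 * X 2 * X 5 : MvPolynomial (Fin 6) k) ∈ I := by
    rw [hI]; exact Ideal.subset_span (by simp)
  have hg3 : (X 3 * X 4 * X 5 : MvPolynomial (Fin 6) k) ∈ I := by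
    rw [hI]; exact Ideal.subset_span (by simp)
  have hM2 : M ^ 2 ∈ (I ^ 2) ^ 2 := by
    have : M ^ 2 = ((X 0 * X 1 * X 4) * (X 0 * X 2 * X 3)) *
        ((X 1 * X 2 * X 5) * (X 3 * X 4 * X 5)) := by subst hM; ring
    rw [this, show ((I^2)^2 : Ideal (MvPolynomial (Fin 6) k)) = (I*I)*(I*I) by ring]
    exact Ideal.mul_mem_mul (Ideal.mul_mem_mul hg0 hg1) (Ideal.mul_mem_mul hg2 hg3)
  have hmic : MemIntClosure (I ^ 2) M := by
    refine ⟨2, by norm_num, fun i => if i = 2 then -(M ^ 2) else 0, ?_, ?_⟩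
    · intro i hi
      simp only [Finset.mem_Icc] at hi
      obtain ⟨h1, h2⟩ := hi
      interval_cases i
      · simp
      · simpa using neg_mem hM2
    · rw [show Finset.Icc 1 2 = {1, 2} from rfl, Finset.sum_pair (by norm_num)]
      simp
  -- M ∉ I ^ 2 via the ideal sqK
  have hle : I ^ 2 ≤ sqK k := by
    rw [hI, sq, Ideal.span_mul_span', Ideal.span_le]
    rintro x ⟨a, ha, b, hb, rfl⟩
    simp only [Set.mem_insert_iff, Set.mem_singleton_iff] at ha hb
    rcases ha with rfl | rfl | rfl | rfl <;> rcases hb with rfl | rfl | rfl | rfl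
    exacts [
      prodK 0 _ _ _ _ _ _ (by simp [Finsupp.single_apply]),
      prodK 0 _ _ _ _ _ _ (by simp [Finsupp.single_apply]),
      prodK 1 _ _ _ _ _ _ (by simp [Finsupp.single_apply]),
      prodK 4 _ _ _ _ _ _ (by simp [Finsupp.single_apply]),
      prodK 0 _ _ _ _ _ _ (by simp [Finsupp.single_apply]),
      prodK 0 _ _ _ _ _ _ (by simp [Finsupp.single_apply]),
      prodK 2 _ _ _ _ _ _ (by simp [Finsupp.single_apply]),
      prodK 3 _ _ _ _ _ _ (by simp [Finsupp.single_apply]),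
      prodK 1 _ _ _ _ _ _ (by simp [Finsupp.single_apply]),
      prodK 2 _ _ _ _ _ _ (by simp [Finsupp.single_apply]),
      prodK 1 _ _ _ _ _ _ (by simp [Finsupp.single_apply]),
      prodK 5 _ _ _ _ _ _ (by simp [Finsupp.single_apply]),
      prodK 4 _ _ _ _ _ _ (by simp [Finsupp.single_apply]),
      prodK 3 _ _ _ _ _ _ (by simp [Finsupp.single_apply]),
      prodK 5 _ _ _ _ _ _ (by simp [Finsupp.single_apply]),
      prodK 3 _ _ _ _ _ _ (by simp [Finsupp.single_apply])]
  have hMnot : M ∉ I ^ 2 := by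
    intro h
    have hK := hle h
    set D : Fin 6 →₀ ℕ := Finsupp.single 0 1 + Finsupp.single 1 1 + Finsupp.single 2 1
      + Finsupp.single 3 1 + Finsupp.single 4 1 + Finsupp.single 5 1 with hD
    have hMD : M = monomial D 1 := by
      subst hM; simp [X, monomial_mul, hD]
    have hcoeff : coeff D M = 1 := by rw [hMD, coeff_monomial, if_pos rfl]
    have hzero : coeff D M = 0 := hK D (by
      intro j
      fin_cases j <;> simp [hD, Finsupp.single_apply])
    rw [hcoeff] at hzero
    exact one_ne_zero hzero
  refine ⟨hmic, hMnot, fun h => ?_⟩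
  have : M ∈ intCl (I ^ 2) := Ideal.subset_span hmic
  rw [h 2] at this
  exact hMnot this
end
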